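/- Let c : edges of ℤ with |i-j| ≤ ρ → (0,∞) be symmetric conductances and let c^1 denote their restriction to nearest-neighbor edges. Define for disjoint A, B ⊂ ℤ the effective conductance C^ρ_eff(A↔B) = inf { ∑_{i<j, |i-j|≤ρ} c_{i,j}(f(j)-f(i))² : f|_A = 0, f|_B = 1 }. Suppose there is a constant K such that ∑_{i≤z} ∑_{j≥z+1} c_{i,j}(j-i) ≤ K c_{z,z+1} for all z. Then C^1_eff(A↔B) ≤ C^ρ_eff(A↔B) ≤ K · C^1_eff(A↔B) for all disjoint A, B and all ρ ∈ ℕ ∪ {∞}. -/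

import Mathlib

open scoped ENNReal

/-- The Dirichlet effective conductance between `A` and `B` for the network on `ℤ` with
conductances `c`, keeping only edges of length at most `ρ ∈ ℕ ∪ {∞}`. -/
noncomputable def effCond (c : ℤ → ℤ → ℝ) (ρ : ℕ∞) (A B : Set ℤ) : ℝ≥0∞ :=
  ⨅ (f : ℤ → ℝ) (_ : ∀ a ∈ A, f a = 0) (_ : ∀ b ∈ B, f b = 1),
    ∑' p : ℤ × ℤ,
      if p.1 < p.2 ∧ (((p.2 - p.1).natAbs : ℕ∞) ≤ ρ) then
        ENNReal.ofReal (c p.1 p.2 * (f p.2 - f p.1) ^ 2)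
      else 0


lemma tele_aux6 (f : ℤ → ℝ) (i : ℤ) :
    ∀ j, i ≤ j → f j - f i = ∑ z ∈ Finset.Ico i j, (f (z + 1) - f z) := by
  refine Int.le_induction ?_ ?_
  · simp
  · intro n hn ih
    have hins : Finset.Ico i (n + 1) = insert n (Finset.Ico i n) := by
      ext x; simp only [Finset.mem_Ico, Finset.mem_insert]; omega
    rw [hins, Finset.sum_insert (by simp), ← ih]; ring

lemma cs_aux6 (f : ℤ → ℝ) {i j : ℤ} (hij : i < j) :
    (f j - f i) ^ 2 ≤ ((j - i : ℤ) : ℝ) * ∑ z ∈ Finset.Ico i j, (f (z + 1) - f z) ^ 2 := by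
  rw [tele_aux6 f i j hij.le]
  have h := sq_sum_le_card_mul_sum_sq (s := Finset.Ico i j)
    (f := fun z => f (z + 1) - f z) (α := ℝ)
  have hc : ((Finset.Ico i j).card : ℝ) = ((j - i : ℤ) : ℝ) := by
    rw [Int.card_Ico]
    exact_mod_cast congrArg (Int.cast : ℤ → ℝ) (Int.toNat_of_nonneg (by omega : (0:ℤ) ≤ j - i))
  rwa [hc] at h

/-- The ρ = 1 energy as a sum over ℤ. -/
lemma E1_eq_aux6 (c : ℤ → ℤ → ℝ) (f : ℤ → ℝ) :
    (∑' p : ℤ × ℤ,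
      if p.1 < p.2 ∧ (((p.2 - p.1).natAbs : ℕ∞) ≤ 1) then
        ENNReal.ofReal (c p.1 p.2 * (f p.2 - f p.1) ^ 2)
      else 0)
    = ∑' z : ℤ, ENNReal.ofReal (c z (z + 1) * (f (z + 1) - f z) ^ 2) := by
  refine tsum_eq_tsum_of_ne_zero_bij (fun z => ((z.1 : ℤ), z.1 + 1)) ?_ ?_ ?_
  · intro a b h
    simp only [Prod.mk.injEq] at h
    exact Subtype.ext h.1
  · rintro ⟨i, j⟩ hp
    simp only [Function.mem_support, ne_eq] at hp
    have hcond : i < j ∧ (((j - i).natAbs : ℕ∞) ≤ 1) := by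
      by_contra h; rw [if_neg h] at hp; exact hp rfl
    have hji : j = i + 1 := by
      have h1 : (j - i).natAbs ≤ 1 := by exact_mod_cast hcond.2
      omega
    subst hji
    rw [if_pos hcond] at hp
    exact ⟨⟨i, hp⟩, rfl⟩
  · rintro ⟨z, hz⟩
    have : (z < z + 1 ∧ (((z + 1 - z).natAbs : ℕ∞) ≤ 1)) := by
      constructor
      · omega
      · norm_num
    rw [if_pos this]

lemma key_aux6 (c : ℤ → ℤ → ℝ) (K : ℝ)
    (hpos : ∀ i j : ℤ, i ≠ j → 0 < c i j)
    (hsummable : ∀ z : ℤ,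
      Summable (fun p : ℕ × ℕ =>
        c (z - p.1) (z + 1 + p.2) * (((z + 1 + (p.2 : ℤ)) - (z - (p.1 : ℤ))) : ℤ)))
    (hK : ∀ z : ℤ,
      (∑' p : ℕ × ℕ,
          c (z - p.1) (z + 1 + p.2) * (((z + 1 + (p.2 : ℤ)) - (z - (p.1 : ℤ))) : ℤ))
        ≤ K * c z (z + 1)) (z : ℤ) :
    (∑' p : ℤ × ℤ, if p.1 ≤ z ∧ z < p.2 then
        ENNReal.ofReal (c p.1 p.2 * ((p.2 - p.1 : ℤ) : ℝ)) else 0)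
      ≤ ENNReal.ofReal K * ENNReal.ofReal (c z (z + 1)) := by
  have hbij : (∑' p : ℤ × ℤ, if p.1 ≤ z ∧ z < p.2 then
        ENNReal.ofReal (c p.1 p.2 * ((p.2 - p.1 : ℤ) : ℝ)) else 0)
      = ∑' q : ℕ × ℕ,
        ENNReal.ofReal (c (z - q.1) (z + 1 + q.2)
          * ((((z + 1 + (q.2 : ℤ)) - (z - (q.1 : ℤ))) : ℤ) : ℝ)) := by
    refine tsum_eq_tsum_of_ne_zero_bij (fun q => ((z - q.1.1, z + 1 + q.1.2) : ℤ × ℤ)) ?_ ?_ ?_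
    · intro a b h
      simp only [Prod.mk.injEq] at h
      refine Subtype.ext (Prod.ext ?_ ?_)
      · exact_mod_cast (by omega : (a.1.1 : ℤ) = b.1.1)
      · exact_mod_cast (by omega : (a.1.2 : ℤ) = b.1.2)
    · rintro ⟨i, j⟩ hp
      simp only [Function.mem_support, ne_eq] at hp
      have hcond : i ≤ z ∧ z < j := by
        by_contra h; rw [if_neg h] at hp; exact hp rfl
      refine ⟨⟨((z - i).toNat, (j - (z + 1)).toNat), ?_⟩, ?_⟩
      · have h1 : (((z - i).toNat : ℤ)) = z - i := Int.toNat_of_nonneg (by omega)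
        have h2 : (((j - (z + 1)).toNat : ℤ)) = j - (z + 1) := Int.toNat_of_nonneg (by omega)
        simp only [Function.mem_support, ne_eq]
        have e1 : z - ((z - i).toNat : ℤ) = i := by omega
        have e2 : z + 1 + ((j - (z + 1)).toNat : ℤ) = j := by omega
        rw [e1, e2]
        rw [if_pos hcond] at hp
        exact hp
      · have h1 : (((z - i).toNat : ℤ)) = z - i := Int.toNat_of_nonneg (by omega)
        have h2 : (((j - (z + 1)).toNat : ℤ)) = j - (z + 1) := Int.toNat_of_nonneg (by omega)
        simp only [Prod.mk.injEq]
        omega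
    · rintro ⟨⟨q1, q2⟩, hq⟩
      have hcond : z - (q1 : ℤ) ≤ z ∧ z < z + 1 + (q2 : ℤ) := by omega
      rw [if_pos hcond]
  rw [hbij, ← ENNReal.ofReal_tsum_of_nonneg ?_ (hsummable z)]
  · refine le_trans (ENNReal.ofReal_le_ofReal (hK z)) ?_
    rw [ENNReal.ofReal_mul']
    exact (hpos z (z + 1) (by omega)).le
  · intro q
    have h1 : z - (q.1 : ℤ) ≠ z + 1 + (q.2 : ℤ) := by omega
    have hc := hpos _ _ h1
    have h2 : (0:ℝ) ≤ (((z + 1 + (q.2 : ℤ)) - (z - (q.1 : ℤ)) : ℤ) : ℝ) := by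
      have : (0:ℤ) ≤ (z + 1 + (q.2 : ℤ)) - (z - (q.1 : ℤ)) := by omega
      exact_mod_cast this
    positivity

lemma energy_le_aux6 (c : ℤ → ℤ → ℝ) (K : ℝ)
    (hpos : ∀ i j : ℤ, i ≠ j → 0 < c i j)
    (hkey : ∀ z : ℤ, (∑' p : ℤ × ℤ, if p.1 ≤ z ∧ z < p.2 then
        ENNReal.ofReal (c p.1 p.2 * ((p.2 - p.1 : ℤ) : ℝ)) else 0)
      ≤ ENNReal.ofReal K * ENNReal.ofReal (c z (z + 1)))
    (f : ℤ → ℝ) (ρ : ℕ∞) :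
    (∑' p : ℤ × ℤ, if p.1 < p.2 ∧ (((p.2 - p.1).natAbs : ℕ∞) ≤ ρ) then
        ENNReal.ofReal (c p.1 p.2 * (f p.2 - f p.1) ^ 2) else 0)
    ≤ ENNReal.ofReal K *
      ∑' z : ℤ, ENNReal.ofReal (c z (z + 1) * (f (z + 1) - f z) ^ 2) := by
  set d : ℤ → ℝ≥0∞ := fun z => ENNReal.ofReal ((f (z + 1) - f z) ^ 2) with hd
  set w : ℤ → ℤ → ℝ≥0∞ := fun i j => ENNReal.ofReal (c i j * ((j - i : ℤ) : ℝ)) with hw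
  calc
    (∑' p : ℤ × ℤ, if p.1 < p.2 ∧ (((p.2 - p.1).natAbs : ℕ∞) ≤ ρ) then
        ENNReal.ofReal (c p.1 p.2 * (f p.2 - f p.1) ^ 2) else 0)
      ≤ ∑' p : ℤ × ℤ, ∑' z : ℤ, (if p.1 ≤ z ∧ z < p.2 then w p.1 p.2 else 0) * d z := by
        refine ENNReal.tsum_le_tsum fun p => ?_
        by_cases h : p.1 < p.2 ∧ (((p.2 - p.1).natAbs : ℕ∞) ≤ ρ)
        · rw [if_pos h]
          obtain ⟨hlt, -⟩ := h
          have hsum : (∑' z : ℤ, (if p.1 ≤ z ∧ z < p.2 then w p.1 p.2 else 0) * d z)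
              = ∑ z ∈ Finset.Ico p.1 p.2, w p.1 p.2 * d z := by
            rw [tsum_eq_sum (s := Finset.Ico p.1 p.2)
              (by intro z hz
                  rw [Finset.mem_Ico] at hz
                  rw [if_neg hz, zero_mul])]
            refine Finset.sum_congr rfl fun z hz => ?_
            rw [Finset.mem_Ico] at hz
            rw [if_pos hz]
          rw [hsum]
          calc ENNReal.ofReal (c p.1 p.2 * (f p.2 - f p.1) ^ 2)
              ≤ ENNReal.ofReal (c p.1 p.2 * (((p.2 - p.1 : ℤ) : ℝ)
                  * ∑ z ∈ Finset.Ico p.1 p.2, (f (z + 1) - f z) ^ 2)) := by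
                refine ENNReal.ofReal_le_ofReal ?_
                exact mul_le_mul_of_nonneg_left (cs_aux6 f hlt) (hpos p.1 p.2 hlt.ne).le
            _ = ∑ z ∈ Finset.Ico p.1 p.2, w p.1 p.2 * d z := by
                rw [← mul_assoc, ENNReal.ofReal_mul (by
                  have h1 : (0:ℝ) ≤ ((p.2 - p.1 : ℤ) : ℝ) := by
                    exact_mod_cast (by omega : (0:ℤ) ≤ p.2 - p.1)
                  have := (hpos p.1 p.2 hlt.ne).le
                  positivity),
                  ENNReal.ofReal_sum_of_nonneg (fun z _ => by positivity), Finset.mul_sum]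
        · rw [if_neg h]; exact zero_le
    _ = ∑' z : ℤ, ∑' p : ℤ × ℤ, (if p.1 ≤ z ∧ z < p.2 then w p.1 p.2 else 0) * d z :=
        ENNReal.tsum_comm
    _ = ∑' z : ℤ, (∑' p : ℤ × ℤ, if p.1 ≤ z ∧ z < p.2 then w p.1 p.2 else 0) * d z :=
        tsum_congr fun z => ENNReal.tsum_mul_right
    _ ≤ ∑' z : ℤ, (ENNReal.ofReal K * ENNReal.ofReal (c z (z + 1))) * d z :=
        ENNReal.tsum_le_tsum fun z => mul_le_mul_left (hkey z) _
    _ = ENNReal.ofReal K * ∑' z : ℤ, ENNReal.ofReal (c z (z + 1) * (f (z + 1) - f z) ^ 2) := by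
        rw [← ENNReal.tsum_mul_left]
        refine tsum_congr fun z => ?_
        rw [mul_assoc, ← ENNReal.ofReal_mul (hpos z (z + 1) (by omega)).le]

/-- If the symmetric positive conductances `c` satisfy
`∑_{i≤z} ∑_{j≥z+1} c_{i,j}(j-i) ≤ K c_{z,z+1}` for all `z`, then for all disjoint `A, B ⊆ ℤ`
and all `ρ ∈ ℕ ∪ {∞}` with `ρ ≥ 1`:
`C¹_eff(A↔B) ≤ C^ρ_eff(A↔B) ≤ K · C¹_eff(A↔B)`. -/
theorem stmt6 (c : ℤ → ℤ → ℝ) (K : ℝ)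
    (hsymm : ∀ i j : ℤ, c i j = c j i)
    (hpos : ∀ i j : ℤ, i ≠ j → 0 < c i j)
    (hsummable : ∀ z : ℤ,
      Summable (fun p : ℕ × ℕ =>
        c (z - p.1) (z + 1 + p.2) * (((z + 1 + (p.2 : ℤ)) - (z - (p.1 : ℤ))) : ℤ)))
    (hK : ∀ z : ℤ,
      (∑' p : ℕ × ℕ,
          c (z - p.1) (z + 1 + p.2) * (((z + 1 + (p.2 : ℤ)) - (z - (p.1 : ℤ))) : ℤ))
        ≤ K * c z (z + 1)) :
    ∀ (A B : Set ℤ), Disjoint A B → ∀ ρ : ℕ∞, 1 ≤ ρ →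
      effCond c 1 A B ≤ effCond c ρ A B ∧
      effCond c ρ A B ≤ ENNReal.ofReal K * effCond c 1 A B := by
  have hc01 : 0 < c 0 1 := hpos 0 1 (by norm_num)
  have hK1 : 1 ≤ K := by
    have hle := Summable.le_tsum (hsummable 0) (0, 0) (fun q _ => by
      have h1 : (0:ℤ) - (q.1 : ℤ) ≠ 0 + 1 + (q.2 : ℤ) := by omega
      have hc := hpos _ _ h1
      have h2 : (0:ℝ) ≤ (((0 + 1 + (q.2 : ℤ)) - (0 - (q.1 : ℤ)) : ℤ) : ℝ) := by
        exact_mod_cast (by omega : (0:ℤ) ≤ (0 + 1 + (q.2 : ℤ)) - (0 - (q.1 : ℤ)))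
      positivity)
    have h := hle.trans (hK 0)
    norm_num at h
    nlinarith
  have hK0 : (0:ℝ) < K := by linarith
  intro A B hAB ρ hρ
  constructor
  · unfold effCond
    refine le_iInf fun f => le_iInf fun hA => le_iInf fun hB =>
      iInf_le_of_le f (iInf_le_of_le hA (iInf_le_of_le hB
        (ENNReal.tsum_le_tsum fun p => ?_)))
    by_cases h : p.1 < p.2 ∧ (((p.2 - p.1).natAbs : ℕ∞) ≤ 1)
    · rw [if_pos h, if_pos ⟨h.1, h.2.trans hρ⟩]
    · rw [if_neg h]; exact zero_le
  · unfold effCond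
    have hne0 : (ENNReal.ofReal K) ≠ 0 := (ENNReal.ofReal_pos.mpr hK0).ne'
    rw [ENNReal.mul_iInf_of_ne hne0 ENNReal.ofReal_ne_top]
    refine le_iInf fun f => ?_
    rw [ENNReal.mul_iInf_of_ne hne0 ENNReal.ofReal_ne_top]
    refine le_iInf fun hA => ?_
    rw [ENNReal.mul_iInf_of_ne hne0 ENNReal.ofReal_ne_top]
    refine le_iInf fun hB => ?_
    refine le_trans (iInf_le_of_le f (iInf_le_of_le hA (iInf_le_of_le hB le_rfl))) ?_
    rw [E1_eq_aux6 c f]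
    exact energy_le_aux6 c K hpos (key_aux6 c K hpos hsummable hK) f ρ
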